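/- Let V, V̂ ∈ ℝ^p, let J = {j : V_j ≠ 0} with |J| = s₀, let Δ = V̂ − V, and let λ > 0, φ > 0. Assume ‖Δ‖₁ ≤ 4s₀λ/φ². Define the first thresholded set Ĵ₀ = {j ∈ {1,…,p} : |V̂_j| > 4λ}. Then the number of false positives satisfies |Ĵ₀ \ J| ≤ s₀/φ². -/

import Mathlib

open Finset

theorem stmt3 {p : ℕ} (V Vhat : Fin p → ℝ)
    (J : Finset (Fin p)) (hJ : ∀ j, j ∈ J ↔ V j ≠ 0)
    (s0 : ℕ) (hs0 : J.card = s0)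
    (Δ : Fin p → ℝ) (hΔ : Δ = Vhat - V)
    (lam φ : ℝ) (hlam : 0 < lam) (hφ : 0 < φ)
    (hΔ1 : ∑ j, |Δ j| ≤ 4 * s0 * lam / φ ^ 2)
    (J0 : Finset (Fin p)) (hJ0 : ∀ j, j ∈ J0 ↔ 4 * lam < |Vhat j|) :
    ((J0 \ J).card : ℝ) ≤ s0 / φ ^ 2 := by
  have key : ((J0 \ J).card : ℝ) * (4 * lam) ≤ ∑ j, |Δ j| := by
    have h1 : ((J0 \ J).card : ℝ) * (4 * lam) ≤ ∑ j ∈ J0 \ J, |Δ j| := by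
      have hc := Finset.card_nsmul_le_sum (J0 \ J) (fun j => |Δ j|) (4 * lam)
        (fun j hj => ?_)
      · simpa [nsmul_eq_mul, mul_comm] using hc
      rw [Finset.mem_sdiff, hJ0, hJ] at hj
      have hV : V j = 0 := not_not.mp hj.2
      have : Δ j = Vhat j := by simp [hΔ, hV]
      simpa [this] using hj.1.le
    refine h1.trans (Finset.sum_le_sum_of_subset_of_nonneg (Finset.subset_univ _)
      fun _ _ _ => abs_nonneg _)
  have h2 : ((J0 \ J).card : ℝ) * (4 * lam) ≤ 4 * s0 * lam / φ ^ 2 := key.trans hΔ1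
  have hφ2 : (0:ℝ) < φ ^ 2 := by positivity
  have h3 : ((J0 \ J).card : ℝ) * (4 * lam) * φ ^ 2 ≤ 4 * s0 * lam := by
    rw [← le_div_iff₀ hφ2]; exact h2
  rw [le_div_iff₀ hφ2]
  nlinarith [h3, hlam]
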